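/- Let q ≥ 2, m ≥ 2, N ≥ s ≥ 1 be integers, set n = mN, and let Lmax ≥ ms be an integer. Suppose p ∈ Σ^N has distinct s-windows, and define C_pilot := { interleaving of p with (c_0,…,c_{m−2}) : c_0,…,c_{m−2} ∈ O_p }. Then C_pilot ⊆ Σ^n is an (ms, Lmax)-single-strand torn-paper code: for any two distinct z, z′ ∈ C_pilot, T_{ms}^{Lmax}(z) ∩ T_{ms}^{Lmax}(z′) = ∅. -/

import Mathlib

/-- The length-`s` window of the string `x` at location `i`. -/
def win {α : Type*} (x : List α) (i s : ℕ) : List α := (x.drop i).take s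

/-- `x ⊥ₛ y`: no length-`s` window of `x` equals a length-`s` window of `y`. -/
def perp {α : Type*} (s : ℕ) (x y : List α) : Prop :=
  ∀ i j, i + s ≤ x.length → j + s ≤ y.length → win x i s ≠ win y j s

/-- `O_p`: the set of strings of length `N` over `ZMod q` all of whose length-`s` windows
differ from every length-`s` window of `p`. -/
def Op (q N s : ℕ) (p : List (ZMod q)) : Set (List (ZMod q)) :=
  {c | c.length = N ∧ perp s c p}

/-- `p` has distinct `s`-windows: equal length-`s` windows occur only at equal locations. -/
def distinctWindows {α : Type*} (s : ℕ) (p : List α) : Prop :=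
  ∀ i j, i + s ≤ p.length → j + s ≤ p.length → win p i s = win p j s → i = j

/-- The interleaving of the pilot `p` with `m − 1` strings `c₀, …, c_{m−2}`, all of length
`N`: the string `z ∈ Σ^{mN}` with `z_{mt} = p_t` and `z_{mt+r} = (c_{r−1})_t` for
`1 ≤ r ≤ m − 1` and `0 ≤ t < N`. -/
def interleave (q m N : ℕ) (p : List (ZMod q)) (c : Fin (m - 1) → List (ZMod q)) :
    List (ZMod q) :=
  List.ofFn fun u : Fin (m * N) =>
    if (u : ℕ) % m = 0 then p.getD ((u : ℕ) / m) 0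
    else if h : (u : ℕ) % m - 1 < m - 1 then (c ⟨(u : ℕ) % m - 1, h⟩).getD ((u : ℕ) / m) 0
    else 0

-- helper lemmas
lemma win_getD {α : Type*} [Inhabited α] (d : α) (x : List α) (i s k : ℕ) (hk : k < s)
    (h : i + s ≤ x.length) : (win x i s).getD k d = x.getD (i + k) d := by
  have h1 : k < (win x i s).length := by simp [win]; omega
  have h2 : i + k < x.length := by omega
  rw [List.getD_eq_getElem _ _ h1, List.getD_eq_getElem _ _ h2]
  simp [win]

lemma win_length {α : Type*} (x : List α) (i s : ℕ) (h : i + s ≤ x.length) :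
    (win x i s).length = s := by simp [win]; omega

lemma win_ext {α : Type*} [Inhabited α] (d : α) (x y : List α) (i j s : ℕ)
    (hx : i + s ≤ x.length) (hy : j + s ≤ y.length)
    (h : ∀ k < s, x.getD (i + k) d = y.getD (j + k) d) : win x i s = win y j s := by
  apply List.ext_getElem
  · rw [win_length _ _ _ hx, win_length _ _ _ hy]
  · intro k h1 h2
    have hk : k < s := by rwa [win_length _ _ _ hx] at h1
    have e1 := win_getD d x i s k hk hx
    have e2 := win_getD d y j s k hk hy
    rw [List.getD_eq_getElem _ _ h1] at e1
    rw [List.getD_eq_getElem _ _ h2] at e2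
    rw [e1, e2, h k hk]

lemma interleave_length (q m N : ℕ) (p : List (ZMod q)) (c : Fin (m - 1) → List (ZMod q)) :
    (interleave q m N p c).length = m * N := by simp [interleave]

lemma interleave_getD (q m N : ℕ) (p : List (ZMod q)) (c : Fin (m - 1) → List (ZMod q))
    (i : ℕ) (hi : i < m * N) :
    (interleave q m N p c).getD i 0 =
      if i % m = 0 then p.getD (i / m) 0
      else if h : i % m - 1 < m - 1 then (c ⟨i % m - 1, h⟩).getD (i / m) 0 else 0 := by
  have h1 : i < (interleave q m N p c).length := by rw [interleave_length]; exact hi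
  rw [List.getD_eq_getElem _ _ h1]
  simp [interleave]

lemma interleave_getD_pilot (q m N : ℕ) (p : List (ZMod q)) (c : Fin (m - 1) → List (ZMod q))
    (i : ℕ) (hi : i < m * N) (h0 : i % m = 0) :
    (interleave q m N p c).getD i 0 = p.getD (i / m) 0 := by
  rw [interleave_getD q m N p c i hi, if_pos h0]

lemma interleave_getD_data (q m N : ℕ) (hm : 2 ≤ m) (p : List (ZMod q))
    (c : Fin (m - 1) → List (ZMod q)) (i : ℕ) (hi : i < m * N) (h0 : i % m ≠ 0) :
    (interleave q m N p c).getD i 0 =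
      (c ⟨i % m - 1, by have := Nat.mod_lt i (show 0 < m by omega); omega⟩).getD (i / m) 0 := by
  rw [interleave_getD q m N p c i hi, if_neg h0, dif_pos]

lemma rho_lt (m a : ℕ) (hm : 0 < m) : (m - a % m) % m < m := Nat.mod_lt _ hm

lemma rho_mod (m a : ℕ) (hm : 0 < m) : (a + (m - a % m) % m) % m = 0 := by
  have hr : a % m < m := Nat.mod_lt _ hm
  rw [Nat.add_mod, Nat.mod_mod_of_dvd _ dvd_rfl]
  rcases Nat.eq_zero_or_pos (a % m) with h | h
  · rw [h]; simp
  · have h1 : (m - a % m) % m = m - a % m := Nat.mod_eq_of_lt (by omega)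
    rw [h1]
    have h2 : a % m + (m - a % m) = m := by omega
    rw [h2, Nat.mod_self]

lemma ms_split (m s : ℕ) (hs : 1 ≤ s) : m * s = (s - 1) * m + m := by
  obtain ⟨s', rfl⟩ : ∃ s', s = s' + 1 := ⟨s - 1, by omega⟩
  simp only [Nat.add_sub_cancel]
  ring

lemma stride_pilot (q m N s : ℕ) (hm : 2 ≤ m) (hs : 1 ≤ s) (p : List (ZMod q))
    (c : Fin (m - 1) → List (ZMod q))
    (u : List (ZMod q)) (hu : m * s ≤ u.length) (a : ℕ) (ha : a + u.length ≤ m * N)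
    (hocc : ∀ i < u.length, u.getD i 0 = (interleave q m N p c).getD (a + i) 0) :
    (a + (m - a % m) % m) / m + s ≤ N ∧
    ∀ k < s, u.getD ((m - a % m) % m + k * m) 0 =
      p.getD ((a + (m - a % m) % m) / m + k) 0 := by
  have hm0 : 0 < m := by omega
  set ρ := (m - a % m) % m with hρdef
  set t0 := (a + ρ) / m with ht0def
  have hρ : ρ < m := rho_lt m a hm0
  have hmod : (a + ρ) % m = 0 := rho_mod m a hm0
  have hdm := Nat.div_add_mod (a + ρ) m
  rw [← ht0def] at hdm
  have hdiv : a + ρ = m * t0 := by omega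
  have hms := ms_split m s hs
  have key : ∀ k < s, a + (ρ + k * m) = m * (t0 + k) := by
    intro k hk
    rw [Nat.mul_add, ← hdiv]
    ring
  have hlt : ∀ k < s, ρ + k * m < u.length := by
    intro k hk
    have hkm : k * m ≤ (s - 1) * m := Nat.mul_le_mul_right m (by omega)
    omega
  constructor
  · have h1 := key (s - 1) (by omega)
    have h2 := hlt (s - 1) (by omega)
    have h3 : m * (t0 + (s - 1)) < m * N := by omega
    have h4 := Nat.lt_of_mul_lt_mul_left h3
    omega
  · intro k hk
    have hb : m * (t0 + k) < m * N := by
      have h1 := key k hk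
      have h2 := hlt k hk
      omega
    rw [hocc _ (hlt k hk), key k hk,
      interleave_getD_pilot q m N p c _ hb (by simp [Nat.mul_mod_right]),
      Nat.mul_div_cancel_left _ hm0]

lemma stride_data (q m N s : ℕ) (hm : 2 ≤ m) (hs : 1 ≤ s) (p : List (ZMod q))
    (c : Fin (m - 1) → List (ZMod q))
    (u : List (ZMod q)) (hu : m * s ≤ u.length) (a : ℕ) (ha : a + u.length ≤ m * N)
    (hocc : ∀ i < u.length, u.getD i 0 = (interleave q m N p c).getD (a + i) 0)
    (ρ : ℕ) (hρ : ρ < m) (hne : (a + ρ) % m ≠ 0) :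
    ∃ (j : Fin (m - 1)) (t1 : ℕ), t1 + s ≤ N ∧
      ∀ k < s, u.getD (ρ + k * m) 0 = (c j).getD (t1 + k) 0 := by
  have hm0 : 0 < m := by omega
  set t1 := (a + ρ) / m with ht1def
  have hms := ms_split m s hs
  have hdm := Nat.div_add_mod (a + ρ) m
  rw [← ht1def] at hdm
  have hjlt : (a + ρ) % m - 1 < m - 1 := by
    have := Nat.mod_lt (a + ρ) hm0
    omega
  have hlt : ∀ k < s, ρ + k * m < u.length := by
    intro k hk
    have hkm : k * m ≤ (s - 1) * m := Nat.mul_le_mul_right m (by omega)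
    omega
  refine ⟨⟨(a + ρ) % m - 1, hjlt⟩, t1, ?_, ?_⟩
  · have h2 := hlt (s - 1) (by omega)
    have hme : m * (t1 + (s - 1)) = m * t1 + (s - 1) * m := by ring
    have h5 : m * (t1 + (s - 1)) < m * N := by omega
    have h6 := Nat.lt_of_mul_lt_mul_left h5
    omega
  · intro k hk
    have hidx : a + (ρ + k * m) = (a + ρ) + k * m := by ring
    rw [hocc _ (hlt k hk), hidx,
      interleave_getD_data q m N hm p c _ (by have := hlt k hk; omega)
        (by rw [Nat.add_mul_mod_self_right]; exact hne)]
    simp only [Nat.add_mul_mod_self_right, Nat.add_mul_div_right _ _ hm0]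
    rfl

lemma unique_pos (q m N s : ℕ) (hm : 2 ≤ m) (hs : 1 ≤ s) (p : List (ZMod q))
    (hp : p.length = N) (hdw : distinctWindows s p)
    (c c' : Fin (m - 1) → List (ZMod q))
    (hc : ∀ i, c i ∈ Op q N s p) (hc' : ∀ i, c' i ∈ Op q N s p)
    (u : List (ZMod q)) (hu : m * s ≤ u.length) (a a' : ℕ)
    (ha : a + u.length ≤ m * N) (ha' : a' + u.length ≤ m * N)
    (hocc : ∀ i < u.length, u.getD i 0 = (interleave q m N p c).getD (a + i) 0)
    (hocc' : ∀ i < u.length, u.getD i 0 = (interleave q m N p c').getD (a' + i) 0) :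
    a = a' := by
  have hm0 : 0 < m := by omega
  obtain ⟨hNs, hA⟩ := stride_pilot q m N s hm hs p c u hu a ha hocc
  obtain ⟨hNs', hA'⟩ := stride_pilot q m N s hm hs p c' u hu a' ha' hocc'
  set ρ := (m - a % m) % m with hρdef
  set ρ' := (m - a' % m) % m with hρ'def
  set t0 := (a + ρ) / m with ht0def
  set t0' := (a' + ρ') / m with ht0'def
  have hρ : ρ < m := rho_lt m a hm0
  have hρ' : ρ' < m := rho_lt m a' hm0
  have hmod : (a + ρ) % m = 0 := rho_mod m a hm0
  have hmod' : (a' + ρ') % m = 0 := rho_mod m a' hm0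
  -- Step 1: (a' + ρ) % m = 0
  have hzero : (a' + ρ) % m = 0 := by
    by_contra hne
    obtain ⟨j, t1, ht1, hB⟩ :=
      stride_data q m N s hm hs p c' u hu a' ha' hocc' ρ hρ hne
    have hwin : win (c' j) t1 s = win p t0 s := by
      apply win_ext (0 : ZMod q)
      · rw [(hc' j).1]; exact ht1
      · rw [hp]; exact hNs
      · intro k hk
        rw [← hB k hk, hA k hk]
    exact (hc' j).2 t1 t0 (by rw [(hc' j).1]; exact ht1) (by rw [hp]; exact hNs) hwin
  -- Step 2: ρ = ρ'
  have hρρ : ρ = ρ' := by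
    have hd1 : m ∣ a' + ρ := Nat.dvd_of_mod_eq_zero hzero
    have hd2 : m ∣ a' + ρ' := Nat.dvd_of_mod_eq_zero hmod'
    rcases le_total ρ ρ' with h | h
    · have : m ∣ (a' + ρ') - (a' + ρ) := Nat.dvd_sub hd2 hd1
      have h2 : (a' + ρ') - (a' + ρ) = ρ' - ρ := by omega
      rw [h2] at this
      have := Nat.eq_zero_of_dvd_of_lt this
      by_contra hne
      have h3 : ρ' - ρ ≠ 0 := by omega
      omega
    · have : m ∣ (a' + ρ) - (a' + ρ') := Nat.dvd_sub hd1 hd2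
      have h2 : (a' + ρ) - (a' + ρ') = ρ - ρ' := by omega
      rw [h2] at this
      have := Nat.eq_zero_of_dvd_of_lt this
      by_contra hne
      have h3 : ρ - ρ' ≠ 0 := by omega
      omega
  -- Step 3: t0 = t0'
  have hwin : win p t0 s = win p t0' s := by
    apply win_ext (0 : ZMod q)
    · rw [hp]; exact hNs
    · rw [hp]; exact hNs'
    · intro k hk
      rw [← hA k hk, hρρ, hA' k hk]
  have ht00 : t0 = t0' := hdw t0 t0' (by rw [hp]; exact hNs) (by rw [hp]; exact hNs') hwin
  have hdm := Nat.div_add_mod (a + ρ) m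
  rw [← ht0def] at hdm
  have hdm' := Nat.div_add_mod (a' + ρ') m
  rw [← ht0'def] at hdm'
  have e1 : a + ρ = m * t0 := by omega
  have e2 : a' + ρ' = m * t0' := by omega
  rw [ht00] at e1
  omega

def segOff {α : Type*} (l : List (List α)) (j : ℕ) : ℕ := ((l.take j).map List.length).sum

lemma segOff_zero {α : Type*} (l : List (List α)) : segOff l 0 = 0 := by simp [segOff]

lemma segOff_succ {α : Type*} (u : List α) (t : List (List α)) (j : ℕ) :
    segOff (u :: t) (j + 1) = u.length + segOff t j := by simp [segOff]

lemma segOff_add_le {α : Type*} (l : List (List α)) (j : ℕ) (h : j < l.length) :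
    segOff l j + (l[j]).length ≤ l.flatten.length := by
  induction l generalizing j with
  | nil => simp at h
  | cons u t ih =>
    cases j with
    | zero => simp [segOff_zero]
    | succ j =>
      have hj : j < t.length := by simpa using h
      have := ih j hj
      simp only [segOff_succ, List.getElem_cons_succ, List.flatten_cons, List.length_append]
      omega

lemma piece_eq_win {α : Type*} (l : List (List α)) (j : ℕ) (h : j < l.length) :
    win l.flatten (segOff l j) (l[j]).length = l[j] := by
  induction l generalizing j with
  | nil => simp at h
  | cons u t ih =>
    cases j with
    | zero =>
      simp only [segOff_zero, List.getElem_cons_zero, List.flatten_cons, win, List.drop_zero]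
      exact List.take_left (l₁ := u) (l₂ := t.flatten)
    | succ j =>
      have hj : j < t.length := by simpa using h
      have := ih j hj
      simp only [segOff_succ, List.getElem_cons_succ, List.flatten_cons, win,
        List.drop_length_add_append] at this ⊢
      exact this

lemma segOff_last {α : Type*} (l : List (List α)) (j : ℕ) (hj : j + 1 = l.length) :
    segOff l j + (l[j]'(by omega)).length = l.flatten.length := by
  induction l generalizing j with
  | nil => simp at hj
  | cons u t ih =>
    cases j with
    | zero =>
      have : t = [] := by
        have : t.length = 0 := by simpa using hj.symm
        exact List.length_eq_zero_iff.mp this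
      subst this
      simp [segOff_zero]
    | succ j =>
      have hj' : j + 1 = t.length := by simpa using hj
      have := ih j hj'
      simp only [segOff_succ, List.getElem_cons_succ, List.flatten_cons, List.length_append]
      omega

lemma eq_flatten {α : Type*} (l : List (List α)) (w : List α)
    (hlen : w.length = l.flatten.length)
    (hw : ∀ j (h : j < l.length), win w (segOff l j) (l[j]).length = l[j]) :
    w = l.flatten := by
  induction l generalizing w with
  | nil => simpa using List.length_eq_zero_iff.mp (by simpa using hlen)
  | cons u t ih =>
    have h0 := hw 0 (by simp)
    simp only [segOff_zero, List.getElem_cons_zero, win, List.drop_zero] at h0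
    have hd : w.drop u.length = t.flatten := by
      apply ih
      · simp only [List.length_drop, hlen, List.flatten_cons, List.length_append]
        omega
      · intro j hj
        have h1 := hw (j + 1) (by simpa using hj)
        simp only [segOff_succ, List.getElem_cons_succ] at h1
        have hww : win (w.drop u.length) (segOff t j) (t[j]'hj).length =
            win w (u.length + segOff t j) (t[j]'hj).length := by
          simp only [win, List.drop_drop, Nat.add_comm]
        rw [hww]
        exact h1
    calc w = w.take u.length ++ w.drop u.length := (List.take_append_drop _ _).symm
    _ = u ++ t.flatten := by rw [h0, hd]
    _ = (u :: t).flatten := by simp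

lemma occ_of_flatten {α : Type*} [Inhabited α] (d : α) (l : List (List α)) (j : ℕ)
    (h : j < l.length) (i : ℕ) (hi : i < (l[j]).length) :
    (l[j]).getD i d = l.flatten.getD (segOff l j + i) d := by
  conv_lhs => rw [← piece_eq_win l j h]
  exact win_getD d _ _ _ i hi (segOff_add_le l j h)

/-- The set of `(Lmin, Lmax)`-segmentations of a string `x` (a list over the alphabet):
multisets arising from decompositions `x = u₀ ∘ u₁ ∘ ⋯ ∘ u_{m-1}` into nonempty consecutive
substrings, where every substring except possibly the last has length at least `Lmin`,
and every substring has length at most `Lmax`. -/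
def segSpec {α : Type*} (Lmin Lmax : ℕ) (x : List α) : Set (Multiset (List α)) :=
  {M | ∃ l : List (List α),
        l.flatten = x ∧
        (∀ u ∈ l, u ≠ [] ∧ u.length ≤ Lmax) ∧
        (∀ u ∈ l.dropLast, Lmin ≤ u.length) ∧
        (l : Multiset (List α)) = M}

/-- The pilot construction: all interleavings of the pilot `p` with `m − 1` strings
from `O_p`. -/
def Cpilot (q m N s : ℕ) (p : List (ZMod q)) : Set (List (ZMod q)) :=
  {z | ∃ c : Fin (m - 1) → List (ZMod q), (∀ i, c i ∈ Op q N s p) ∧ z = interleave q m N p c}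

/-- The pilot construction is an `(ms, Lmax)`-single-strand torn-paper code: distinct
codewords have disjoint `(ms, Lmax)`-segmentation spectra. -/
theorem stmt10 (q m N s Lmax : ℕ) (hq : 2 ≤ q) (hm : 2 ≤ m) (hs : 1 ≤ s) (hsN : s ≤ N)
    (hLmax : m * s ≤ Lmax) (p : List (ZMod q)) (hp : p.length = N)
    (hdw : distinctWindows s p) :
    ∀ z ∈ Cpilot q m N s p, ∀ z' ∈ Cpilot q m N s p, z ≠ z' →
      segSpec (m * s) Lmax z ∩ segSpec (m * s) Lmax z' = ∅ := by
  intro z hz z' hz' hne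
  rw [Set.eq_empty_iff_forall_notMem]
  rintro M ⟨hM, hM'⟩
  obtain ⟨c, hc, rfl⟩ := hz
  obtain ⟨c', hc', rfl⟩ := hz'
  apply hne
  set z := interleave q m N p c with hzdef
  set z' := interleave q m N p c' with hz'def
  obtain ⟨l, hfl, hne1, hmin, hMl⟩ := hM
  obtain ⟨l', hfl', hne1', hmin', hMl'⟩ := hM'
  have hzlen : z.length = m * N := interleave_length q m N p c
  have hz'len : z'.length = m * N := interleave_length q m N p c'
  have hperm : l.Perm l' := by
    rw [← Multiset.coe_eq_coe]
    rw [hMl, hMl']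
  have hflat : l.flatten.length = m * N := by rw [hfl, hzlen]
  have hflat' : l'.flatten.length = m * N := by rw [hfl', hz'len]
  -- occurrences
  have hoccl : ∀ (j : ℕ) (h : j < l.length), ∀ i < (l[j]).length,
      (l[j]).getD i 0 = z.getD (segOff l j + i) 0 := by
    intro j h i hi
    rw [← hfl]
    exact occ_of_flatten 0 l j h i hi
  have hoccl' : ∀ (j : ℕ) (h : j < l'.length), ∀ i < (l'[j]).length,
      (l'[j]).getD i 0 = z'.getD (segOff l' j + i) 0 := by
    intro j h i hi
    rw [← hfl']
    exact occ_of_flatten 0 l' j h i hi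
  -- main claim : z' = l.flatten
  have hmain : z' = l.flatten := by
    apply eq_flatten
    · rw [hz'len, hflat]
    · intro j hj
      obtain ⟨j', hj', hj'eq⟩ := List.mem_iff_getElem.mp (hperm.subset (List.getElem_mem hj))
      have hbound : segOff l j + (l[j]).length ≤ m * N := by
        have := segOff_add_le l j hj
        omega
      have hbound' : segOff l' j' + (l[j]).length ≤ m * N := by
        have := segOff_add_le l' j' hj'
        rw [hj'eq] at this
        omega
      have hoccu' : ∀ i < (l[j]).length,
          (l[j]).getD i 0 = z'.getD (segOff l' j' + i) 0 := by
        intro i hi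
        have := hoccl' j' hj' i (by rw [hj'eq]; exact hi)
        rw [hj'eq] at this
        exact this
      have haa : segOff l j = segOff l' j' := by
        by_cases hlong : m * s ≤ (l[j]).length
        · exact unique_pos q m N s hm hs p hp hdw c c' hc hc' (l[j]) hlong
            (segOff l j) (segOff l' j') hbound hbound' (hoccl j hj) hoccu'
        · -- short piece : must be last in both
          have hjlast : j + 1 = l.length := by
            by_contra hfalse
            have hjd : j < l.dropLast.length := by
              rw [List.length_dropLast]; omega
            have : l[j] ∈ l.dropLast := by
              rw [← List.getElem_dropLast (xs := l) (i := j) hjd]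
              exact List.getElem_mem hjd
            exact hlong (hmin _ this)
          have hj'last : j' + 1 = l'.length := by
            by_contra hfalse
            have hjd : j' < l'.dropLast.length := by
              rw [List.length_dropLast]; omega
            have : l'[j'] ∈ l'.dropLast := by
              rw [← List.getElem_dropLast (xs := l') (i := j') hjd]
              exact List.getElem_mem hjd
            rw [hj'eq] at this
            exact hlong (hmin' _ this)
          have e1 := segOff_last l j hjlast
          have e2 := segOff_last l' j' hj'last
          rw [hj'eq] at e2
          omega
      rw [haa, ← hj'eq, ← hfl']
      exact piece_eq_win l' j' hj'
  rw [hfl] at hmain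
  exact hmain.symm
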